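/- Let M ≥ 1 and let χ : (−∞,0] → (−∞,0] be concave, non-decreasing, not identically 0, with χ(0) = 0, differentiable at every t < 0, and satisfying |t·χ'(t)| ≤ M·|χ(t)| for every t < 0. Then χ(t) < 0 for every t < 0, and for every t ≤ 0 and every λ ≥ 1 one has −χ(λ·t) ≤ λ^M·(−χ(t)). -/

import Mathlib

open Set

/-- Growth estimate for weights in the class `𝒲⁺_M` (used in the proof of Proposition 3.5
of the paper): if `χ : (−∞,0] → (−∞,0]` is concave, non-decreasing, not identically `0`,
vanishes at `0`, is differentiable at every `t < 0` with `|t·χ'(t)| ≤ M·|χ(t)|`, then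
`χ(t) < 0` for every `t < 0` and `−χ(λ·t) ≤ λ^M·(−χ(t))` for all `t ≤ 0` and `λ ≥ 1`. -/
theorem weight_growth_estimate
    (M : ℝ) (hM : 1 ≤ M) (χ χ' : ℝ → ℝ)
    (hconc : ConcaveOn ℝ (Set.Iic 0) χ) (hmono : MonotoneOn χ (Set.Iic 0))
    (hneg : ∀ t ≤ (0 : ℝ), χ t ≤ 0) (hzero : χ 0 = 0)
    (hnontriv : ∃ t ≤ (0 : ℝ), χ t ≠ 0)
    (hderiv : ∀ t < (0 : ℝ), HasDerivAt χ (χ' t) t)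
    (hbound : ∀ t < (0 : ℝ), |t * χ' t| ≤ M * |χ t|) :
    (∀ t < (0 : ℝ), χ t < 0) ∧
    ∀ t ≤ (0 : ℝ), ∀ lam : ℝ, 1 ≤ lam → -χ (lam * t) ≤ lam ^ M * (-χ t) := by
  have hMpos : (0:ℝ) < M := lt_of_lt_of_le one_pos hM
  -- Part 1 : χ < 0 on (−∞,0)
  have hχneg : ∀ t < (0:ℝ), χ t < 0 := by
    intro t ht
    by_contra hcon
    push_neg at hcon
    have ht1 : χ t = 0 := le_antisymm (hneg t ht.le) hcon
    obtain ⟨t0, ht0le, ht0ne⟩ := hnontriv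
    have ht0neg : χ t0 < 0 := lt_of_le_of_ne (hneg t0 ht0le) ht0ne
    set S : Set ℝ := {z | z ≤ 0 ∧ χ z = 0} with hSdef
    have hSne : S.Nonempty := ⟨t, ht.le, ht1⟩
    have hlb : ∀ z ∈ S, t0 < z := by
      rintro z ⟨hz0, hzχ⟩
      by_contra h
      push_neg at h
      have := hmono hz0 ht0le h
      rw [hzχ] at this
      exact absurd (le_antisymm (hneg t0 ht0le) this) ht0ne
    have hbdd : BddBelow S := ⟨t0, fun z hz => (hlb z hz).le⟩
    set c := sInf S with hcdef
    have hcS : c ≤ t := csInf_le hbdd ⟨ht.le, ht1⟩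
    have hcneg : c < 0 := lt_of_le_of_lt hcS ht
    -- χ c = 0 by continuity
    have hχc : χ c = 0 := by
      refine le_antisymm (hneg c hcneg.le) ?_
      by_contra h
      push_neg at h
      have hev : ∀ᶠ x in nhds c, χ x < 0 :=
        (hderiv c hcneg).continuousAt.eventually_lt continuousAt_const h
      rw [Metric.eventually_nhds_iff] at hev
      obtain ⟨ε, hε, hball⟩ := hev
      obtain ⟨z, hzS, hzlt⟩ := exists_lt_of_csInf_lt hSne (show sInf S < c + ε by linarith)
      have hzc : c ≤ z := csInf_le hbdd hzS
      have : χ z < 0 := by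
        apply hball
        rw [Real.dist_eq, abs_lt]
        constructor <;> linarith
      rw [hzS.2] at this
      exact lt_irrefl 0 this
    -- choose s slightly to the left of c
    set δ : ℝ := -c / (2 * M) with hδdef
    have hδpos : 0 < δ := div_pos (by linarith) (by linarith)
    set s : ℝ := c - δ with hsdef
    have hsc : s < c := by rw [hsdef]; linarith
    have hsneg : s < 0 := lt_trans hsc hcneg
    have hχs : χ s < 0 := by
      rcases lt_or_eq_of_le (hneg s hsneg.le) with h | h
      · exact h
      · exact absurd (csInf_le hbdd ⟨hsneg.le, h⟩) (not_le.mpr hsc)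
    -- slope inequality from concavity
    have hslope : slope χ s c ≤ χ' s :=
      hconc.slope_le_of_hasDerivAt hsneg.le hcneg.le hsc (hderiv s hsneg)
    rw [slope_def_field, hχc] at hslope
    have hcs : c - s = δ := by rw [hsdef]; ring
    rw [hcs] at hslope
    have hχ'pos : 0 < χ' s :=
      lt_of_lt_of_le (div_pos (by linarith) hδpos) hslope
    have hb := hbound s hsneg
    rw [abs_of_nonpos (hneg s hsneg.le),
      abs_of_nonpos (by nlinarith : s * χ' s ≤ 0)] at hb
    -- hb : -(s * χ' s) ≤ M * -χ s
    have hsval : -s = δ * (2 * M) + δ := by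
      rw [hsdef, hδdef]; field_simp; ring
    have hδχ : -χ s ≤ δ * χ' s := by
      have h1 := mul_le_mul_of_nonneg_left hslope hδpos.le
      have h2 : δ * ((0 - χ s) / δ) = -χ s := by field_simp; ring
      linarith
    have h2 : -(s * χ' s) = (2 * M) * (δ * χ' s) + δ * χ' s := by
      have : -(s * χ' s) = (-s) * χ' s := by ring
      rw [this, hsval]; ring
    have h3 : (2 * M) * (-χ s) ≤ (2 * M) * (δ * χ' s) :=
      mul_le_mul_of_nonneg_left hδχ (by linarith)
    nlinarith [mul_pos hMpos (neg_pos.mpr hχs), neg_pos.mpr hχs]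
  refine ⟨hχneg, ?_⟩
  -- Part 2
  intro t ht lam hlam
  have hlampos : (0:ℝ) < lam := lt_of_lt_of_le one_pos hlam
  rcases eq_or_lt_of_le ht with h0 | htneg
  · simp [h0, mul_zero, hzero]
  -- auxiliary function g
  set g : ℝ → ℝ := fun x => Real.log (-χ x) - M * Real.log (-x) with hgdef
  have key : ∀ x ∈ Iio (0:ℝ),
      HasDerivAt g (-χ' x / -χ x - M * ((-1) / (-x))) x := by
    intro x hx
    have hx0 : x < 0 := hx
    have hχx : χ x < 0 := hχneg x hx0
    have h1 : HasDerivAt (fun y => Real.log (-χ y)) (-χ' x / -χ x) x :=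
      ((hderiv x hx0).neg).log (by intro hcon; rw [Pi.neg_apply, neg_eq_zero] at hcon; linarith)
    have h2 : HasDerivAt (fun y : ℝ => Real.log (-y)) ((-1) / (-x)) x := by
      have hneg' : HasDerivAt (fun y : ℝ => -y) (-1) x := (hasDerivAt_id x).neg
      exact hneg'.log (by intro hcon; rw [neg_eq_zero] at hcon; linarith)
    exact h1.sub (h2.const_mul M)
  have hderivg : ∀ x ∈ Iio (0:ℝ), 0 ≤ -χ' x / -χ x - M * ((-1) / (-x)) := by
    intro x hx
    have hx0 : x < 0 := hx
    have hχx : χ x < 0 := hχneg x hx0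
    have hb := hbound x hx0
    rw [abs_of_nonpos (hneg x hx0.le)] at hb
    have hnum : M * χ x ≤ x * χ' x := by
      have := neg_abs_le (x * χ' x)
      linarith
    have hsimp : -χ' x / -χ x - M * ((-1) / (-x)) = χ' x / χ x - M / x := by
      rw [neg_div_neg_eq, neg_div_neg_eq, mul_one_div]
    rw [hsimp, div_sub_div _ _ (ne_of_lt hχx) (ne_of_lt hx0)]
    apply div_nonneg
    · nlinarith
    · exact le_of_lt (mul_pos_of_neg_of_neg hχx hx0)
  have hmonog : MonotoneOn g (Iio (0:ℝ)) := by
    apply monotoneOn_of_deriv_nonneg (convex_Iio 0)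
    · exact fun x hx => ((key x hx).continuousAt).continuousWithinAt
    · intro x hx
      rw [interior_Iio] at hx
      exact ((key x hx).differentiableAt).differentiableWithinAt
    · intro x hx
      rw [interior_Iio] at hx
      rw [(key x hx).deriv]
      exact hderivg x hx
  have hlt : lam * t ≤ t := by nlinarith
  have hltneg : lam * t < 0 := mul_neg_of_pos_of_neg hlampos htneg
  have hg := hmonog hltneg htneg hlt
  -- unfold
  have hχt : χ t < 0 := hχneg t htneg
  have hχlt : χ (lam * t) < 0 := hχneg _ hltneg
  have hloge : Real.log (-(lam * t)) = Real.log lam + Real.log (-t) := by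
    rw [show -(lam * t) = lam * (-t) by ring,
      Real.log_mul (ne_of_gt hlampos) (by intro hcon; rw [neg_eq_zero] at hcon; linarith)]
  have hkey : Real.log (-χ (lam * t)) ≤ Real.log (-χ t) + M * Real.log lam := by
    simp only [hgdef, hloge] at hg
    linarith
  have hexp : -χ (lam * t) ≤ Real.exp (Real.log (-χ t) + M * Real.log lam) := by
    calc -χ (lam * t) = Real.exp (Real.log (-χ (lam * t))) :=
          (Real.exp_log (by linarith)).symm
      _ ≤ _ := Real.exp_le_exp.mpr hkey
  rw [Real.exp_add, Real.exp_log (by linarith)] at hexp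
  rw [Real.rpow_def_of_pos hlampos]
  calc -χ (lam * t) ≤ (-χ t) * Real.exp (M * Real.log lam) := hexp
    _ = Real.exp (Real.log lam * M) * (-χ t) := by
        rw [mul_comm (Real.log lam) M]; ring
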